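/- arXiv:math/0502359 — 3 statements merged into one kernel-verified Lean document; each statement's English description precedes it below -/
import Mathlib

section
/- Let G be a finite group, p a prime, S ∈ Syl_p(G), and P ≤ S. Then P satisfies |N_S(P)| ≥ |N_S(Q)| for every Q ≤ S which is G-conjugate to P if and only if N_S(P) is a Sylow p-subgroup of N_G(P). -/
/-- The conjugate subgroup `g P g⁻¹`. -/
def conjBy {G : Type*} [Group G] (g : G) (P : Subgroup G) : Subgroup G :=
  P.map (MulAut.conj g).toMonoidHom

open scoped Pointwise

lemma conjBy_eq_smul {G : Type*} [Group G] (g : G) (P : Subgroup G) :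
    conjBy g P = MulAut.conj g • P := rfl

lemma conjBy_normalizer {G : Type*} [Group G] (g : G) (P : Subgroup G) :
    Subgroup.normalizer (conjBy g P : Set G) = conjBy g (Subgroup.normalizer (P : Set G)) :=
  (Subgroup.map_equiv_normalizer_eq P (MulAut.conj g)).symm

lemma card_pointwise_smul {G : Type*} [Group G] {α : Type*} [Group α]
    [MulDistribMulAction α G] (a : α) (H : Subgroup G) :
    Nat.card (a • H : Subgroup G) = Nat.card H :=
  (Nat.card_congr (Subgroup.equivSMul a H).toEquiv).symm

lemma isPGroup_pointwise_smul {p : ℕ} {G : Type*} [Group G] {α : Type*} [Group α]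
    [MulDistribMulAction α G] (a : α) {H : Subgroup G} (h : IsPGroup p H) :
    IsPGroup p (a • H : Subgroup G) := by
  rw [Subgroup.pointwise_smul_def]
  exact h.map _

/-- For `P ≤ S ∈ Syl_p(G)`: `P` is fully normalized (i.e. `|N_S(P)| ≥ |N_S(Q)|` for every
`G`-conjugate `Q ≤ S` of `P`) if and only if `N_S(P)` is a Sylow `p`-subgroup of `N_G(P)`. -/
theorem stmt11 {p : ℕ} (hp : p.Prime) {G : Type*} [Group G] [Finite G]
    (S : Sylow p G) (P : Subgroup G) (hP : P ≤ S) :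
    (∀ g : G, conjBy g P ≤ (S : Subgroup G) →
        Nat.card ↥((S : Subgroup G) ⊓ Subgroup.normalizer (conjBy g P : Set G))
          ≤ Nat.card ↥((S : Subgroup G) ⊓ (Subgroup.normalizer (P : Set G))))
    ↔ ∃ T : Sylow p ↥(Subgroup.normalizer (P : Set G)),
        (T : Subgroup ↥(Subgroup.normalizer (P : Set G)))
          = ((S : Subgroup G) ⊓ (Subgroup.normalizer (P : Set G))).subgroupOf (Subgroup.normalizer (P : Set G)) := by
  haveI : Fact p.Prime := ⟨hp⟩
  set N := Subgroup.normalizer (P : Set G) with hN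
  -- card of N_S(P) as subgroup of N equals its card as subgroup of G
  have hJcard : Nat.card (((S : Subgroup G) ⊓ N).subgroupOf N)
      = Nat.card ((S : Subgroup G) ⊓ N : Subgroup G) :=
    Nat.card_congr (Subgroup.subgroupOfEquivOfLe inf_le_right).toEquiv
  constructor
  · intro h
    have hJp : IsPGroup p (((S : Subgroup G) ⊓ N).subgroupOf N) :=
      (S.2.to_inf_left (K := N)).comap_subtype
    obtain ⟨T, hT⟩ := hJp.exists_le_sylow
    refine ⟨T, ?_⟩
    refine (Subgroup.eq_of_le_of_card_ge hT ?_).symm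
    -- map T into G
    set TG : Subgroup G := (T : Subgroup ↥N).map N.subtype with hTG
    have hTGcard : Nat.card TG = Nat.card (T : Subgroup ↥N) :=
      (Nat.card_congr ((T : Subgroup ↥N).equivMapOfInjective N.subtype
        N.subtype_injective).toEquiv).symm
    have hTGp : IsPGroup p TG := T.2.map N.subtype
    obtain ⟨S2, hS2⟩ := hTGp.exists_le_sylow
    obtain ⟨g, hg⟩ := MulAction.exists_smul_eq G S2 S
    have hgS2 : MulAut.conj g • (S2 : Subgroup G) = (S : Subgroup G) := by
      rw [← Sylow.coe_subgroup_smul, hg]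
    have hPTG : P ≤ TG := by
      have h1 : P.subgroupOf N ≤ (T : Subgroup ↥N) :=
        le_trans (fun x hx => Subgroup.mem_subgroupOf.mpr
          (Subgroup.mem_inf.mpr ⟨hP (Subgroup.mem_subgroupOf.mp hx), x.2⟩)) hT
      have := Subgroup.map_mono (f := N.subtype) h1
      rwa [Subgroup.subgroupOf_map_subtype, inf_eq_left.mpr Subgroup.le_normalizer] at this
    have hTGN : TG ≤ N := Subgroup.map_subtype_le _
    -- conjugate everything by g
    have hsmul_le : MulAut.conj g • TG ≤ (S : Subgroup G) := by
      rw [← hgS2]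
      exact Subgroup.pointwise_smul_le_pointwise_smul_iff.mpr hS2
    have hQle : conjBy g P ≤ (S : Subgroup G) := by
      rw [conjBy_eq_smul]
      exact le_trans (Subgroup.pointwise_smul_le_pointwise_smul_iff.mpr hPTG) hsmul_le
    have hle2 : MulAut.conj g • TG ≤ (S : Subgroup G) ⊓ Subgroup.normalizer (conjBy g P : Set G) := by
      refine le_inf hsmul_le ?_
      rw [conjBy_normalizer, conjBy_eq_smul]
      exact Subgroup.pointwise_smul_le_pointwise_smul_iff.mpr hTGN
    calc Nat.card (((S : Subgroup G) ⊓ N).subgroupOf N)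
        = Nat.card ((S : Subgroup G) ⊓ N : Subgroup G) := hJcard
      _ ≥ Nat.card ((S : Subgroup G) ⊓ Subgroup.normalizer (conjBy g P : Set G) : Subgroup G) := h g hQle
      _ ≥ Nat.card (MulAut.conj g • TG : Subgroup G) := Subgroup.card_le_of_le hle2
      _ = Nat.card TG := card_pointwise_smul _ _
      _ = Nat.card (T : Subgroup ↥N) := hTGcard
  · rintro ⟨T, hT⟩ g hQle
    set Q := conjBy g P with hQ
    set K : Subgroup G := (MulAut.conj g)⁻¹ • ((S : Subgroup G) ⊓ Subgroup.normalizer (Q : Set G)) with hK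
    have hKcard : Nat.card K = Nat.card ((S : Subgroup G) ⊓ Subgroup.normalizer (Q : Set G) : Subgroup G) :=
      card_pointwise_smul _ _
    have hKN : K ≤ N := by
      have h1 : (S : Subgroup G) ⊓ Subgroup.normalizer (Q : Set G) ≤ MulAut.conj g • N := by
        refine le_trans inf_le_right ?_
        rw [hQ, conjBy_normalizer, conjBy_eq_smul]
      calc K ≤ (MulAut.conj g)⁻¹ • (MulAut.conj g • N) :=
            Subgroup.pointwise_smul_le_pointwise_smul_iff.mpr h1
        _ = N := inv_smul_smul _ _
    have hKp : IsPGroup p K :=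
      isPGroup_pointwise_smul _ (S.2.to_inf_left (K := Subgroup.normalizer (Q : Set G)))
    obtain ⟨T2, hT2⟩ := (hKp.comap_subtype (K := N)).exists_le_sylow
    obtain ⟨n, hn⟩ := MulAction.exists_smul_eq ↥N T2 T
    have hT2card : Nat.card (T2 : Subgroup ↥N) = Nat.card (T : Subgroup ↥N) := by
      rw [← hn, Sylow.coe_subgroup_smul, card_pointwise_smul]
    have hKsub : Nat.card K = Nat.card (K.subgroupOf N) :=
      (Nat.card_congr (Subgroup.subgroupOfEquivOfLe hKN).toEquiv).symm
    calc Nat.card ((S : Subgroup G) ⊓ Subgroup.normalizer (Q : Set G) : Subgroup G)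
        = Nat.card K := hKcard.symm
      _ = Nat.card (K.subgroupOf N) := hKsub
      _ ≤ Nat.card (T2 : Subgroup ↥N) := Subgroup.card_le_of_le hT2
      _ = Nat.card (T : Subgroup ↥N) := hT2card
      _ = Nat.card ((S : Subgroup G) ⊓ N : Subgroup G) := by rw [hT, hJcard]
end

section
/- Let G be a finite group, p a prime, S ∈ Syl_p(G), and P ≤ S a subgroup such that N_S(P) ∈ Syl_p(N_G(P)). Then: (a) the image of N_S(P) in N_G(P)/C_G(P) is a Sylow p-subgroup of N_G(P)/C_G(P), and (b) C_S(P) ∈ Syl_p(C_G(P)); in particular |C_S(P)| ≥ |C_S(Q)| for every Q ≤ S which is G-conjugate to P. -/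
open Subgroup

section Aux

variable {G : Type*} [Group G]

/-- The centralizer of `P` is contained in the normalizer of `P`. -/
lemma centralizer_le_normalizer' (P : Subgroup G) :
    Subgroup.centralizer (P : Set G) ≤ (Subgroup.normalizer (P : Set G)) := by
  intro c hc
  rw [Subgroup.mem_normalizer_iff]
  intro h
  constructor
  · intro hh
    have h1 := hc h hh
    have h2 : c * h * c⁻¹ = h := by rw [← h1]; group
    rw [h2]; exact hh
  · intro hh
    have h1 := hc _ hh
    have h2 : c * h = c * (c * h * c⁻¹) := by
      calc c * h = (c * h * c⁻¹) * c := by group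
        _ = c * (c * h * c⁻¹) := h1
    have h3 : h = c * h * c⁻¹ := mul_left_cancel h2
    rw [h3]; exact hh

/-- Elements of the normalizer conjugate the centralizer into itself. -/
lemma conj_mem_centralizer {P : Subgroup G} {n c : G} (hn : n ∈ (Subgroup.normalizer (P : Set G)))
    (hc : c ∈ Subgroup.centralizer (P : Set G)) :
    n * c * n⁻¹ ∈ Subgroup.centralizer (P : Set G) := by
  rw [Subgroup.mem_centralizer_iff] at hc ⊢
  intro x hx
  have hx' : n⁻¹ * x * n ∈ P := by
    have := (Subgroup.mem_normalizer_iff.mp ((Subgroup.normalizer (P : Set G)).inv_mem hn) x).mp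
    simpa [mul_assoc] using (Subgroup.mem_normalizer_iff.mp (inv_mem hn) x).mp hx
  have h2 := hc _ hx'
  calc x * (n * c * n⁻¹) = n * ((n⁻¹ * x * n) * c) * n⁻¹ := by group
    _ = n * (c * (n⁻¹ * x * n)) * n⁻¹ := by rw [h2]
    _ = (n * c * n⁻¹) * x := by group

/-- Decomposition of elements of a join `A ⊔ C` when `A` normalizes `C`. -/
lemma mem_sup_decomp {A C : Subgroup G}
    (hconj : ∀ a ∈ A, ∀ c ∈ C, a⁻¹ * c * a ∈ C) :
    ∀ x ∈ A ⊔ C, ∃ a ∈ A, ∃ c ∈ C, x = a * c := by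
  let K : Subgroup G :=
    { carrier := {x | ∃ a ∈ A, ∃ c ∈ C, x = a * c}
      one_mem' := ⟨1, A.one_mem, 1, C.one_mem, by simp⟩
      mul_mem' := by
        rintro x y ⟨a, ha, c, hc, rfl⟩ ⟨a', ha', c', hc', rfl⟩
        exact ⟨a * a', mul_mem ha ha', (a'⁻¹ * c * a') * c',
          mul_mem (hconj a' ha' c hc) hc', by group⟩
      inv_mem' := by
        rintro x ⟨a, ha, c, hc, rfl⟩
        refine ⟨a⁻¹, inv_mem ha, a * c⁻¹ * a⁻¹, ?_, by group⟩
        have := hconj a⁻¹ (inv_mem ha) c⁻¹ (inv_mem hc)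
        simpa using this }
  intro x hx
  have hAK : A ≤ K := fun a ha => ⟨a, ha, 1, C.one_mem, by simp⟩
  have hCK : C ≤ K := fun c hc => ⟨1, A.one_mem, c, hc, by simp⟩
  exact sup_le hAK hCK hx

/-- Powers of a product `a*c` modulo conjugates of `c`. -/
lemma pow_decomp {C : Subgroup G} {a c : G} (hc : c ∈ C)
    (hconj : ∀ d ∈ C, a⁻¹ * d * a ∈ C) :
    ∀ n : ℕ, ∃ d ∈ C, (a * c) ^ n = a ^ n * d := by
  intro n
  induction n with
  | zero => exact ⟨1, C.one_mem, by simp⟩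
  | succ n ih =>
    obtain ⟨d, hd, hEq⟩ := ih
    refine ⟨(a⁻¹ * d * a) * c, mul_mem (hconj d hd) hc, ?_⟩
    rw [pow_succ, hEq, pow_succ]
    group

/-- If `K` is normal, then the relative index of `T` in `K` divides the index of `T`. -/
lemma relIndex_dvd_index_of_normal_right {N : Type*} [Group N] [Finite N]
    (T K : Subgroup N) [K.Normal] : T.relIndex K ∣ T.index := by
  have h12 : K.relIndex (T ⊔ K) = K.relIndex T := relIndex_sup_right T K
  -- card identities
  have e1 : (K.subgroupOf T).index * Nat.card (K.subgroupOf T) = Nat.card T :=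
    Subgroup.index_mul_card _
  have e2 : (K.subgroupOf (T ⊔ K)).index * Nat.card (K.subgroupOf (T ⊔ K))
      = Nat.card ↥(T ⊔ K) := Subgroup.index_mul_card _
  have e3 : (T.subgroupOf K).index * Nat.card (T.subgroupOf K) = Nat.card K :=
    Subgroup.index_mul_card _
  have e4 : (T.subgroupOf (T ⊔ K)).index * Nat.card (T.subgroupOf (T ⊔ K))
      = Nat.card ↥(T ⊔ K) := Subgroup.index_mul_card _
  have c2 : Nat.card (K.subgroupOf (T ⊔ K)) = Nat.card K :=
    Nat.card_congr (Subgroup.subgroupOfEquivOfLe le_sup_right).toEquiv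
  have c4 : Nat.card (T.subgroupOf (T ⊔ K)) = Nat.card T :=
    Nat.card_congr (Subgroup.subgroupOfEquivOfLe le_sup_left).toEquiv
  have c1 : Nat.card (K.subgroupOf T) = Nat.card ↥(K ⊓ T) := by
    have h : K.subgroupOf T = (K ⊓ T).subgroupOf T :=
      (Subgroup.inf_subgroupOf_right K T).symm
    rw [h]
    exact Nat.card_congr (Subgroup.subgroupOfEquivOfLe inf_le_right).toEquiv
  have c3 : Nat.card (T.subgroupOf K) = Nat.card ↥(K ⊓ T) := by
    have h : T.subgroupOf K = (T ⊓ K).subgroupOf K :=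
      (Subgroup.inf_subgroupOf_right T K).symm
    have h2 : (T ⊓ K : Subgroup N) = K ⊓ T := inf_comm T K
    rw [h, h2]
    exact Nat.card_congr (Subgroup.subgroupOfEquivOfLe inf_le_left).toEquiv
  -- abbreviations
  set i := Nat.card ↥(K ⊓ T)
  set t := Nat.card ↥T
  set k := Nat.card ↥K
  set s := Nat.card ↥(T ⊔ K)
  have r1 : K.relIndex T * i = t := by rw [relIndex, ← c1]; exact e1
  have r2 : K.relIndex T * k = s := by
    rw [← h12, relIndex, ← c2]; exact e2
  have r3 : T.relIndex K * i = k := by rw [relIndex, ← c3]; exact e3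
  have r4 : T.relIndex (T ⊔ K) * t = s := by rw [relIndex, ← c4]; exact e4
  have ht : 0 < t := Nat.card_pos
  have key : T.relIndex (T ⊔ K) * t = T.relIndex K * t := by
    calc T.relIndex (T ⊔ K) * t = s := r4
      _ = K.relIndex T * k := r2.symm
      _ = K.relIndex T * (T.relIndex K * i) := by rw [r3]
      _ = T.relIndex K * (K.relIndex T * i) := by ring
      _ = T.relIndex K * t := by rw [r1]
  have : T.relIndex (T ⊔ K) = T.relIndex K := Nat.eq_of_mul_eq_mul_right ht key
  rw [← this]
  exact relIndex_dvd_index_of_le le_sup_left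

/-- The centralizer of a conjugate is the conjugate of the centralizer. -/
lemma centralizer_conjBy (g : G) (P : Subgroup G) :
    Subgroup.centralizer ((conjBy g P : Subgroup G) : Set G)
      = conjBy g (Subgroup.centralizer (P : Set G)) := by
  ext x
  simp only [conjBy, Subgroup.mem_map, MulEquiv.coe_toMonoidHom, MulAut.conj_apply,
    Subgroup.mem_centralizer_iff]
  constructor
  · intro h
    refine ⟨g⁻¹ * x * g, ?_, by group⟩
    intro y hy
    have h' := h (g * y * g⁻¹) (by
      simp only [SetLike.mem_coe, Subgroup.mem_map, MulEquiv.coe_toMonoidHom,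
        MulAut.conj_apply]
      exact ⟨y, hy, rfl⟩)
    calc y * (g⁻¹ * x * g) = g⁻¹ * ((g * y * g⁻¹) * x) * g := by group
      _ = g⁻¹ * (x * (g * y * g⁻¹)) * g := by rw [h']
      _ = (g⁻¹ * x * g) * y := by group
  · rintro ⟨c, hc, rfl⟩ z hz
    simp only [SetLike.mem_coe, Subgroup.mem_map, MulEquiv.coe_toMonoidHom,
      MulAut.conj_apply] at hz
    obtain ⟨y, hy, rfl⟩ := hz
    have h' := hc y hy
    calc (g * y * g⁻¹) * (g * c * g⁻¹) = g * (y * c) * g⁻¹ := by group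
      _ = g * (c * y) * g⁻¹ := by rw [h']
      _ = (g * c * g⁻¹) * (g * y * g⁻¹) := by group

end Aux

/-- Saturation axiom (I) for fusion systems of finite groups.  If `N_S(P)` is a Sylow
`p`-subgroup of `N_G(P)`, then:
(a) the image of `N_S(P)` in `N_G(P)/C_G(P)` is a Sylow `p`-subgroup there (encoded: the
join `N_S(P) ⊔ C_G(P)` is a `p`-group modulo `C_G(P)` and has index in `N_G(P)` coprime
to `p`); and
(b) `C_S(P)` is a Sylow `p`-subgroup of `C_G(P)`; in particular `|C_S(P)| ≥ |C_S(Q)|` for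
every `G`-conjugate `Q ≤ S` of `P`. -/
theorem stmt12 {p : ℕ} (hp : p.Prime) {G : Type*} [Group G] [Finite G]
    (S : Sylow p G) (P : Subgroup G) (hP : P ≤ S)
    (hFN : ∃ T : Sylow p ↥(Subgroup.normalizer (P : Set G)),
      (T : Subgroup ↥(Subgroup.normalizer (P : Set G)))
        = ((S : Subgroup G) ⊓ (Subgroup.normalizer (P : Set G))).subgroupOf (Subgroup.normalizer (P : Set G))) :
    (∀ x ∈ ((S : Subgroup G) ⊓ (Subgroup.normalizer (P : Set G))) ⊔ Subgroup.centralizer (P : Set G),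
        ∃ k : ℕ, x ^ p ^ k ∈ Subgroup.centralizer (P : Set G))
    ∧ Nat.Coprime
        ((((S : Subgroup G) ⊓ (Subgroup.normalizer (P : Set G))) ⊔ Subgroup.centralizer (P : Set G)).relIndex
          (Subgroup.normalizer (P : Set G))) p
    ∧ (∃ T : Sylow p ↥(Subgroup.centralizer (P : Set G)),
        (T : Subgroup ↥(Subgroup.centralizer (P : Set G)))
          = ((S : Subgroup G) ⊓ Subgroup.centralizer (P : Set G)).subgroupOf
              (Subgroup.centralizer (P : Set G)))
    ∧ (∀ g : G, conjBy g P ≤ (S : Subgroup G) →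
        Nat.card ↥((S : Subgroup G) ⊓ Subgroup.centralizer ((conjBy g P : Subgroup G) : Set G))
          ≤ Nat.card ↥((S : Subgroup G) ⊓ Subgroup.centralizer (P : Set G))) := by
  haveI : Fact p.Prime := ⟨hp⟩
  set N := (Subgroup.normalizer (P : Set G)) with hN
  set C := Subgroup.centralizer (P : Set G) with hC
  set A := (S : Subgroup G) ⊓ N with hA
  obtain ⟨T, hT⟩ := hFN
  have hCN : C ≤ N := centralizer_le_normalizer' P
  have hconj : ∀ a ∈ A, ∀ c ∈ C, a⁻¹ * c * a ∈ C := by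
    intro a ha c hc
    have hn : a⁻¹ ∈ N := inv_mem ha.2
    simpa using conj_mem_centralizer hn hc
  -- the normal subgroup `C'` of `N`
  haveI hnormal : ((Subgroup.centralizer (P : Set G)).subgroupOf (Subgroup.normalizer (P : Set G))).Normal := by
    rw [← Subgroup.normalizerMonoidHom_ker]
    exact MonoidHom.normal_ker _
  -- Part (a)
  have partA : ∀ x ∈ A ⊔ C, ∃ k : ℕ, x ^ p ^ k ∈ C := by
    intro x hx
    obtain ⟨a, ha, c, hc, rfl⟩ := mem_sup_decomp hconj x hx
    have haS : a ∈ (S : Subgroup G) := ha.1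
    obtain ⟨k, hk⟩ := S.isPGroup' ⟨a, haS⟩
    have hk' : a ^ p ^ k = 1 := by
      have := congrArg (Subtype.val) hk
      simpa using this
    obtain ⟨d, hd, hEq⟩ := pow_decomp hc (fun d hd => hconj a ha d hd) (p ^ k)
    refine ⟨k, ?_⟩
    rw [hEq, hk', one_mul]
    exact hd
  -- Part (b)
  have hTindex : ¬ p ∣ (T : Subgroup ↥N).index := T.not_dvd_index
  have hrelA : A.relIndex N = (T : Subgroup ↥N).index := by
    rw [hT]; rfl
  have partB : Nat.Coprime ((A ⊔ C).relIndex N) p := by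
    have h1 : (A ⊔ C).relIndex N ∣ A.relIndex N :=
      relIndex_dvd_of_le_left N le_sup_left
    rw [hrelA] at h1
    rw [Nat.coprime_comm]
    exact (hp.coprime_iff_not_dvd).mpr (fun hdvd => hTindex (hdvd.trans h1))
  -- relIndex of `S ⊓ C` in `C` is coprime to `p`
  have hSC : (S : Subgroup G) ⊓ C = A ⊓ C := by
    rw [hA, inf_assoc, inf_eq_right.mpr hCN]
  have hrelC : ¬ p ∣ ((S : Subgroup G) ⊓ C).relIndex C := by
    have e1 : ((S : Subgroup G) ⊓ C).relIndex C = A.relIndex C := by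
      rw [hSC, inf_relIndex_right]
    have e2 : A.relIndex C
        = ((T : Subgroup ↥N)).relIndex (C.subgroupOf N) := by
      rw [hT]
      exact (relIndex_subgroupOf hCN).symm
    have hdvd : ((T : Subgroup ↥N)).relIndex (C.subgroupOf N) ∣ (T : Subgroup ↥N).index :=
      relIndex_dvd_index_of_normal_right _ _
    rw [e1, e2]
    exact fun h => hTindex (h.trans hdvd)
  -- Part (c)
  have hle : (S : Subgroup G) ⊓ C ≤ C := inf_le_right
  have ecard : Nat.card (((S : Subgroup G) ⊓ C).subgroupOf C)
      = Nat.card ↥((S : Subgroup G) ⊓ C) :=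
    Nat.card_congr (Subgroup.subgroupOfEquivOfLe hle).toEquiv
  have hpg : IsPGroup p ↥((S : Subgroup G) ⊓ C) := IsPGroup.to_inf_left S.isPGroup'
  obtain ⟨n, hn⟩ := hpg.exists_card_eq
  have hfac : (Nat.card ↥C).factorization p = n := by
    have hmul : (((S : Subgroup G) ⊓ C).subgroupOf C).index
        * Nat.card (((S : Subgroup G) ⊓ C).subgroupOf C) = Nat.card ↥C :=
      Subgroup.index_mul_card _
    have hidx : (((S : Subgroup G) ⊓ C).subgroupOf C).index
        = ((S : Subgroup G) ⊓ C).relIndex C := rfl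
    rw [ecard, hn, hidx] at hmul
    rw [← hmul]
    have hr0 : ((S : Subgroup G) ⊓ C).relIndex C ≠ 0 := by
      intro h0
      rw [h0, zero_mul] at hmul
      exact Nat.card_pos.ne' hmul.symm
    rw [Nat.factorization_mul hr0 (pow_ne_zero n hp.pos.ne')]
    rw [Finsupp.add_apply, Nat.Prime.factorization_pow hp, Finsupp.single_eq_same,
      Nat.factorization_eq_zero_of_not_dvd hrelC, zero_add]
  have hcard : Nat.card (((S : Subgroup G) ⊓ C).subgroupOf C)
      = p ^ (Nat.card ↥C).factorization p := by
    rw [ecard, hn, hfac]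
  have partC : ∃ T' : Sylow p ↥C,
      (T' : Subgroup ↥C) = ((S : Subgroup G) ⊓ C).subgroupOf C :=
    ⟨Sylow.ofCard _ hcard, Sylow.coe_ofCard _ hcard⟩
  -- Part (d)
  have partD : ∀ g : G, conjBy g P ≤ (S : Subgroup G) →
      Nat.card ↥((S : Subgroup G) ⊓ Subgroup.centralizer ((conjBy g P : Subgroup G) : Set G))
        ≤ Nat.card ↥((S : Subgroup G) ⊓ C) := by
    intro g hg
    set CQ := Subgroup.centralizer ((conjBy g P : Subgroup G) : Set G) with hCQ
    have hCQ' : CQ = conjBy g C := centralizer_conjBy g P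
    have hcc : Nat.card ↥CQ = Nat.card ↥C := by
      rw [hCQ', conjBy]
      exact (Nat.card_congr (Subgroup.equivMapOfInjective C _
        (MulAut.conj g).injective).toEquiv).symm
    have hpg2 : IsPGroup p ↥((S : Subgroup G) ⊓ CQ) := IsPGroup.to_inf_left S.isPGroup'
    have hle2 : (S : Subgroup G) ⊓ CQ ≤ CQ := inf_le_right
    have hpg2' : IsPGroup p (((S : Subgroup G) ⊓ CQ).subgroupOf CQ) :=
      hpg2.of_equiv (Subgroup.subgroupOfEquivOfLe hle2).symm
    obtain ⟨R, hR⟩ := hpg2'.exists_le_sylow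
    have hcard2 : Nat.card ↥((S : Subgroup G) ⊓ CQ)
        = Nat.card (((S : Subgroup G) ⊓ CQ).subgroupOf CQ) :=
      (Nat.card_congr (Subgroup.subgroupOfEquivOfLe hle2).toEquiv).symm
    have hcardR : Nat.card ↥(R : Subgroup ↥CQ) = p ^ (Nat.card ↥CQ).factorization p :=
      R.card_eq_multiplicity
    have hleR : Nat.card (((S : Subgroup G) ⊓ CQ).subgroupOf CQ)
        ≤ Nat.card ↥(R : Subgroup ↥CQ) :=
      Subgroup.card_le_of_le hR
    calc Nat.card ↥((S : Subgroup G) ⊓ CQ)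
        = Nat.card (((S : Subgroup G) ⊓ CQ).subgroupOf CQ) := hcard2
      _ ≤ Nat.card ↥(R : Subgroup ↥CQ) := hleR
      _ = p ^ (Nat.card ↥CQ).factorization p := hcardR
      _ = p ^ (Nat.card ↥C).factorization p := by rw [hcc]
      _ = Nat.card ↥((S : Subgroup G) ⊓ C) := by rw [hfac]; exact hn.symm
  exact ⟨partA, partB, partC, partD⟩
end

section
/- Let G be a finite group, p a prime, S ∈ Syl_p(G), and P ≤ S. Then the number of S-conjugacy classes of subgroups P' ≤ S such that P' is G-conjugate to P and |N_S(P')| ≥ |N_S(Q)| for all Q ≤ S G-conjugate to P, is coprime to p. -/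
/-- `Q` is a fully normalized `G`-conjugate of `P` in `S`: `Q ≤ S`, `Q` is `G`-conjugate
to `P`, and `|N_S(Q)|` is maximal among `G`-conjugates of `P` contained in `S`. -/
def IsFullyNormalizedConjugate {G : Type*} [Group G] (S P Q : Subgroup G) : Prop :=
  Q ≤ S ∧ (∃ g : G, conjBy g P = Q) ∧
    ∀ R : Subgroup G, R ≤ S → (∃ g : G, conjBy g P = R) →
      Nat.card ↥(S ⊓ Subgroup.normalizer (R : Set G)) ≤ Nat.card ↥(S ⊓ Subgroup.normalizer (Q : Set G))

open Subgroup MulAction Pointwise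

section ConjByLemmas

variable {G : Type*} [Group G]

lemma mem_conjBy_iff {g x : G} {Q : Subgroup G} : x ∈ conjBy g Q ↔ g⁻¹ * x * g ∈ Q := by
  rw [conjBy, Subgroup.mem_map_equiv, MulAut.conj_symm_apply]

lemma conjBy_conjBy (a b : G) (Q : Subgroup G) : conjBy a (conjBy b Q) = conjBy (a * b) Q := by
  ext x
  simp only [mem_conjBy_iff, mul_inv_rev, mul_assoc]

lemma conjBy_one (Q : Subgroup G) : conjBy 1 Q = Q := by
  ext x; simp [mem_conjBy_iff]

lemma card_conjBy (g : G) (Q : Subgroup G) : Nat.card (conjBy g Q) = Nat.card Q :=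
  (Nat.card_congr (Q.equivMapOfInjective _ (MulAut.conj g).injective).toEquiv).symm

lemma normalizer_conjBy (g : G) (Q : Subgroup G) :
    (Subgroup.normalizer ((conjBy g Q) : Set G)) = conjBy g (Subgroup.normalizer (Q : Set G)) :=
  (Subgroup.map_equiv_normalizer_eq Q (MulAut.conj g)).symm

lemma conjBy_inf (g : G) (A B : Subgroup G) :
    conjBy g (A ⊓ B) = conjBy g A ⊓ conjBy g B :=
  Subgroup.map_inf A B _ (MulAut.conj g).injective

lemma conjBy_mono (g : G) {A B : Subgroup G} (h : A ≤ B) : conjBy g A ≤ conjBy g B :=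
  Subgroup.map_mono h

lemma conjBy_eq_self_iff {g : G} {Q : Subgroup G} : conjBy g Q = Q ↔ g ∈ (Subgroup.normalizer (Q : Set G)) := by
  rw [Subgroup.mem_normalizer_iff]
  constructor
  · intro h n
    constructor
    · intro hn
      have : g * n * g⁻¹ ∈ conjBy g Q := by
        rw [mem_conjBy_iff]
        simpa [mul_assoc] using hn
      rwa [h] at this
    · intro hn
      have : g * n * g⁻¹ ∈ conjBy g Q := by rw [h]; exact hn
      rw [mem_conjBy_iff] at this
      simpa [mul_assoc] using this
  · intro h
    ext x
    rw [mem_conjBy_iff]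
    constructor
    · intro hx
      have := (h (g⁻¹ * x * g)).mp hx
      simpa [mul_assoc] using this
    · intro hx
      exact (h (g⁻¹ * x * g)).mpr (by simpa [mul_assoc] using hx)

lemma mulAut_conj_smul_eq (g : G) (Q : Subgroup G) : MulAut.conj g • Q = conjBy g Q := by
  rw [Subgroup.pointwise_smul_def]; rfl

lemma conjAct_smul_eq (g : ConjAct G) (Q : Subgroup G) :
    g • Q = conjBy (ConjAct.ofConjAct g) Q := by
  rw [Subgroup.pointwise_smul_def]; rfl

lemma stabilizer_conjAct (Q : Subgroup G) :
    stabilizer (ConjAct G) Q = ((Subgroup.normalizer (Q : Set G)).map ConjAct.toConjAct.toMonoidHom : Subgroup (ConjAct G)) := by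
  ext g
  rw [MulAction.mem_stabilizer_iff, conjAct_smul_eq, conjBy_eq_self_iff]
  rw [show ConjAct.toConjAct.toMonoidHom = (ConjAct.toConjAct : G ≃* ConjAct G).toMonoidHom from rfl,
    Subgroup.mem_map_equiv]
  rfl

end ConjByLemmas

section PGroupLemmas

variable {p : ℕ} [Fact p.Prime] {G : Type*} [Group G] [Finite G]

lemma card_dvd_ordProj {K N : Subgroup G} (hK : IsPGroup p K) (hKN : K ≤ N) :
    Nat.card K ∣ p ^ (Nat.card N).factorization p := by
  obtain ⟨j, hj⟩ := IsPGroup.iff_card.mp hK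
  have h1 : Nat.card (K.subgroupOf N) = Nat.card K :=
    Nat.card_congr (Subgroup.subgroupOfEquivOfLe hKN).toEquiv
  have h2 : Nat.card (K.subgroupOf N) ∣ Nat.card N := Subgroup.card_subgroup_dvd_card _
  rw [h1, hj] at h2
  rw [hj]
  exact pow_dvd_pow p
    ((Nat.Prime.pow_dvd_iff_le_factorization Fact.out Nat.card_pos.ne').mp h2)

/-- If `|N_S(Q₀)|` is maximal among `G`-conjugates of `P` in `S`, then `N_S(Q₀)` is a Sylow
`p`-subgroup of `N_G(Q₀)`. -/
lemma FN_card_eq (S : Sylow p G) {P Q₀ : Subgroup G} (hQS : Q₀ ≤ S)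
    (hQconj : ∃ g : G, conjBy g P = Q₀)
    (hmax : ∀ R : Subgroup G, R ≤ S → (∃ g : G, conjBy g P = R) →
      Nat.card ↥((S : Subgroup G) ⊓ (Subgroup.normalizer (R : Set G))) ≤
        Nat.card ↥((S : Subgroup G) ⊓ (Subgroup.normalizer (Q₀ : Set G)))) :
    Nat.card ↥((S : Subgroup G) ⊓ (Subgroup.normalizer (Q₀ : Set G))) =
      p ^ (Nat.card ↥(Subgroup.normalizer (Q₀ : Set G))).factorization p := by
  set N := (Subgroup.normalizer (Q₀ : Set G)) with hN
  refine le_antisymm ?_ ?_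
  · have hpg : IsPGroup p ((S : Subgroup G) ⊓ N : Subgroup G) := S.isPGroup'.to_le inf_le_left
    exact Nat.le_of_dvd (pow_pos (Fact.out : p.Prime).pos _)
      (card_dvd_ordProj hpg inf_le_right)
  · -- Sylow argument
    have hD : IsPGroup p (((S : Subgroup G) ⊓ N).subgroupOf N) :=
      (S.isPGroup'.to_le inf_le_left).of_equiv
        (Subgroup.subgroupOfEquivOfLe (inf_le_right : (S : Subgroup G) ⊓ N ≤ N)).symm
    obtain ⟨T', hDT'⟩ := hD.exists_le_sylow
    set T'' : Subgroup G := (T' : Subgroup N).map N.subtype with hT''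
    have hT''pg : IsPGroup p T'' := T'.isPGroup'.map _
    obtain ⟨U, hT''U⟩ := hT''pg.exists_le_sylow
    obtain ⟨g, hgU⟩ := MulAction.exists_smul_eq G U S
    have hgU' : conjBy g (U : Subgroup G) = (S : Subgroup G) := by
      rw [← mulAut_conj_smul_eq]
      exact congrArg (fun (W : Sylow p G) => (W : Subgroup G)) hgU
    have hT''N : T'' ≤ N := Subgroup.map_subtype_le _
    have hQ₀D : Q₀ ≤ (S : Subgroup G) ⊓ N := le_inf hQS Subgroup.le_normalizer
    have hDT : (S : Subgroup G) ⊓ N ≤ T'' := by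
      have := Subgroup.map_mono (f := N.subtype) hDT'
      rwa [Subgroup.subgroupOf_map_subtype, inf_eq_left.mpr
        (inf_le_right : (S : Subgroup G) ⊓ N ≤ N)] at this
    set R := conjBy g Q₀ with hR
    have hRS : R ≤ (S : Subgroup G) := by
      calc R ≤ conjBy g T'' := conjBy_mono g (hQ₀D.trans hDT)
      _ ≤ conjBy g (U : Subgroup G) := conjBy_mono g hT''U
      _ = (S : Subgroup G) := hgU'
    have hRconj : ∃ h : G, conjBy h P = R := by
      obtain ⟨h, hh⟩ := hQconj
      exact ⟨g * h, by rw [← conjBy_conjBy, hh]⟩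
    have hsub : conjBy g T'' ≤ (S : Subgroup G) ⊓ (Subgroup.normalizer (R : Set G)) := by
      refine le_inf ((conjBy_mono g hT''U).trans hgU'.le) ?_
      rw [hR, normalizer_conjBy]
      exact conjBy_mono g hT''N
    have hcardT : Nat.card ↥(conjBy g T'') = p ^ (Nat.card ↥N).factorization p := by
      rw [card_conjBy, hT'']
      rw [Nat.card_congr (Subgroup.equivMapOfInjective _ _ N.subtype_injective).toEquiv.symm]
      exact T'.card_eq_multiplicity
    calc p ^ (Nat.card ↥N).factorization p = Nat.card ↥(conjBy g T'') := hcardT.symm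
      _ ≤ Nat.card ↥((S : Subgroup G) ⊓ (Subgroup.normalizer (R : Set G))) := Subgroup.card_le_of_le hsub
      _ ≤ Nat.card ↥((S : Subgroup G) ⊓ (Subgroup.normalizer (Q₀ : Set G))) := hmax R hRS hRconj

/-- If `N_S(x)` has the cardinality of a Sylow `p`-subgroup of `N_G(x)`, then `x ≤ S`. -/
lemma le_S_of_card_eq (S : Sylow p G) {x : Subgroup G} (hx : IsPGroup p x)
    (h : Nat.card ↥((S : Subgroup G) ⊓ (Subgroup.normalizer (x : Set G))) =
      p ^ (Nat.card ↥(Subgroup.normalizer (x : Set G))).factorization p) : x ≤ S := by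
  set N := (Subgroup.normalizer (x : Set G)) with hN
  have hxN : x ≤ N := Subgroup.le_normalizer
  set D' : Subgroup N := ((S : Subgroup G) ⊓ N).subgroupOf N with hD'
  have hDcard : Nat.card D' = p ^ (Nat.card ↥N).factorization p := by
    rw [hD', Nat.card_congr (Subgroup.subgroupOfEquivOfLe
      (inf_le_right : (S : Subgroup G) ⊓ N ≤ N)).toEquiv, h]
  set DSy : Sylow p N := Sylow.ofCard D' hDcard with hDSy
  have hx' : IsPGroup p (x.subgroupOf N) := hx.of_equiv (Subgroup.subgroupOfEquivOfLe hxN).symm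
  obtain ⟨T', hxT'⟩ := hx'.exists_le_sylow
  obtain ⟨n, hn⟩ := MulAction.exists_smul_eq N T' DSy
  have hnormal : (x.subgroupOf N).Normal := Subgroup.normal_in_normalizer
  have hfix : conjBy n (x.subgroupOf N) = x.subgroupOf N :=
    conjBy_eq_self_iff.mpr (by
      rw [Subgroup.normalizer_eq_top_iff.mpr hnormal]; trivial)
  have hxD' : x.subgroupOf N ≤ D' := by
    calc x.subgroupOf N = conjBy n (x.subgroupOf N) := hfix.symm
      _ ≤ conjBy n (T' : Subgroup N) := conjBy_mono n hxT'
      _ = ((n • T' : Sylow p N) : Subgroup N) := by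
          rw [Sylow.coe_subgroup_smul, mulAut_conj_smul_eq]
      _ = D' := by rw [hn, hDSy, Sylow.coe_ofCard]
  have := Subgroup.map_mono (f := N.subtype) hxD'
  rw [Subgroup.subgroupOf_map_subtype, Subgroup.subgroupOf_map_subtype,
    inf_eq_left.mpr hxN, inf_eq_left.mpr (inf_le_right : (S : Subgroup G) ⊓ N ≤ N)] at this
  exact this.trans inf_le_left

end PGroupLemmas

/-- The number of `S`-conjugacy classes of fully normalized subgroups in the `G`-conjugacy
class of `P` is coprime to `p` (encoded via a transversal `T`). -/
theorem stmt17 {p : ℕ} (hp : p.Prime) {G : Type*} [Group G] [Finite G]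
    (S : Sylow p G) (P : Subgroup G) (hP : P ≤ S) :
    ∃ T : Finset (Subgroup G),
      (∀ Q ∈ T, IsFullyNormalizedConjugate (S : Subgroup G) P Q)
      ∧ (∀ Q : Subgroup G, IsFullyNormalizedConjugate (S : Subgroup G) P Q →
          ∃! R : Subgroup G, R ∈ T ∧ ∃ s ∈ (S : Subgroup G), conjBy s Q = R)
      ∧ ¬ p ∣ T.card := by
  classical
  haveI : Fact p.Prime := ⟨hp⟩
  haveI : Fintype (Subgroup G) := Fintype.ofFinite _
  -- choose a maximizer Q₀
  set A : Finset (Subgroup G) :=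
    Finset.univ.filter (fun Q => Q ≤ (S : Subgroup G) ∧ ∃ g : G, conjBy g P = Q) with hA
  have hPA : P ∈ A := by
    rw [hA, Finset.mem_filter]
    exact ⟨Finset.mem_univ _, hP, ⟨1, conjBy_one P⟩⟩
  obtain ⟨Q₀, hQ₀A, hQ₀max⟩ := Finset.exists_max_image A
    (fun Q => Nat.card ↥((S : Subgroup G) ⊓ (Subgroup.normalizer (Q : Set G)))) ⟨P, hPA⟩
  rw [hA, Finset.mem_filter] at hQ₀A
  obtain ⟨-, hQ₀S, hQ₀conj⟩ := hQ₀A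
  have hmax : ∀ R : Subgroup G, R ≤ (S : Subgroup G) → (∃ g : G, conjBy g P = R) →
      Nat.card ↥((S : Subgroup G) ⊓ (Subgroup.normalizer (R : Set G))) ≤
        Nat.card ↥((S : Subgroup G) ⊓ (Subgroup.normalizer (Q₀ : Set G))) := by
    intro R h1 h2
    exact hQ₀max R (by rw [hA, Finset.mem_filter]; exact ⟨Finset.mem_univ _, h1, h2⟩)
  set b : ℕ := (Nat.card ↥(Subgroup.normalizer (Q₀ : Set G))).factorization p with hb
  have hQ₀card : Nat.card ↥((S : Subgroup G) ⊓ (Subgroup.normalizer (Q₀ : Set G))) = p ^ b :=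
    FN_card_eq S hQ₀S hQ₀conj hmax
  have hPpg : IsPGroup p P := S.isPGroup'.to_le hP
  have hNcard : ∀ Q : Subgroup G, (∃ c : G, conjBy c P = Q) →
      Nat.card ↥(Subgroup.normalizer (Q : Set G)) = Nat.card ↥(Subgroup.normalizer (P : Set G)) := by
    rintro Q ⟨c, rfl⟩
    rw [normalizer_conjBy, card_conjBy]
  have hNQ₀ : Nat.card ↥(Subgroup.normalizer (Q₀ : Set G)) = Nat.card ↥(Subgroup.normalizer (P : Set G)) := hNcard Q₀ hQ₀conj
  have hfact : ∀ Q : Subgroup G, (∃ c : G, conjBy c P = Q) →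
      (Nat.card ↥(Subgroup.normalizer (Q : Set G))).factorization p = b := by
    intro Q hQ
    rw [hNcard Q hQ, hb, hNQ₀]
  have hfpow : ∀ Q : Subgroup G, ∃ e : ℕ,
      Nat.card ↥((S : Subgroup G) ⊓ (Subgroup.normalizer (Q : Set G))) = p ^ e := fun Q =>
    IsPGroup.iff_card.mp (S.isPGroup'.to_le inf_le_left)
  have hfle : ∀ Q : Subgroup G, (∃ c : G, conjBy c P = Q) →
      Nat.card ↥((S : Subgroup G) ⊓ (Subgroup.normalizer (Q : Set G))) ≤ p ^ b := by
    intro Q hQ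
    have hd : Nat.card ↥((S : Subgroup G) ⊓ (Subgroup.normalizer (Q : Set G))) ∣
        p ^ (Nat.card ↥(Subgroup.normalizer (Q : Set G))).factorization p :=
      card_dvd_ordProj (S.isPGroup'.to_le inf_le_left) inf_le_right
    rw [hfact Q hQ] at hd
    exact Nat.le_of_dvd (pow_pos hp.pos b) hd
  have hleS : ∀ Q : Subgroup G, (∃ c : G, conjBy c P = Q) →
      Nat.card ↥((S : Subgroup G) ⊓ (Subgroup.normalizer (Q : Set G))) = p ^ b → Q ≤ (S : Subgroup G) := by
    intro Q hQ hcard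
    refine le_S_of_card_eq S ?_ ?_
    · obtain ⟨c, hc⟩ := hQ
      rw [← hc]
      exact hPpg.map _
    · rw [hfact Q hQ]
      exact hcard
  have hFNiff : ∀ Q : Subgroup G, IsFullyNormalizedConjugate (S : Subgroup G) P Q ↔
      ((∃ c : G, conjBy c P = Q) ∧
        Nat.card ↥((S : Subgroup G) ⊓ (Subgroup.normalizer (Q : Set G))) = p ^ b) := by
    intro Q
    constructor
    · rintro ⟨h1, h2, h3⟩
      refine ⟨h2, le_antisymm (hfle Q h2) ?_⟩
      rw [← hQ₀card]
      exact h3 Q₀ hQ₀S hQ₀conj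
    · rintro ⟨h2, hcard⟩
      refine ⟨hleS Q h2 hcard, h2, ?_⟩
      intro R hR hRc
      rw [hcard]
      exact (hmax R hR hRc).trans (le_of_eq hQ₀card)
  have hfconjS : ∀ s : G, s ∈ (S : Subgroup G) → ∀ Q : Subgroup G,
      Nat.card ↥((S : Subgroup G) ⊓ (Subgroup.normalizer ((conjBy s Q) : Set G))) =
        Nat.card ↥((S : Subgroup G) ⊓ (Subgroup.normalizer (Q : Set G))) := by
    intro s hs Q
    have h1 : conjBy s ((S : Subgroup G) ⊓ (Subgroup.normalizer (Q : Set G))) =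
        (S : Subgroup G) ⊓ (Subgroup.normalizer ((conjBy s Q) : Set G)) := by
      rw [conjBy_inf, normalizer_conjBy, conjBy_eq_self_iff.mpr (Subgroup.le_normalizer hs)]
    rw [← h1, card_conjBy]
  -- the action of S on the orbit of P
  set X : Set (Subgroup G) := MulAction.orbit (ConjAct G) P with hX
  have hmemX : ∀ Q : Subgroup G, Q ∈ X ↔ ∃ c : G, conjBy c P = Q := by
    intro Q
    rw [hX, MulAction.mem_orbit_iff]
    constructor
    · rintro ⟨c, rfl⟩
      exact ⟨ConjAct.ofConjAct c, (conjAct_smul_eq c P).symm⟩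
    · rintro ⟨c, rfl⟩
      exact ⟨ConjAct.toConjAct c, by rw [conjAct_smul_eq]; simp⟩
  haveI : Finite (ConjAct G) := Finite.of_equiv G ConjAct.toConjAct.toEquiv
  set S' : Subgroup (ConjAct G) :=
    Subgroup.map ConjAct.toConjAct.toMonoidHom (S : Subgroup G) with hS'
  letI : Fintype ↥X := Fintype.ofFinite _
  letI : Fintype ↥S' := Fintype.ofFinite _
  letI : Fintype (Quotient (MulAction.orbitRel ↥S' ↥X)) := Fintype.ofFinite _
  letI : ∀ x : ↥X, Fintype ↥(MulAction.stabilizer ↥S' x) := fun x => Fintype.ofFinite _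
  have hstab : ∀ x : ↥X, Nat.card ↥(MulAction.stabilizer ↥S' x) =
      Nat.card ↥((S : Subgroup G) ⊓ (Subgroup.normalizer ((↑x : Subgroup G) : Set G))) := by
    intro x
    have h1 : MulAction.stabilizer ↥S' x =
        (MulAction.stabilizer (ConjAct G) (↑x : Subgroup G)).subgroupOf S' := by
      ext s
      rw [MulAction.mem_stabilizer_iff, Subgroup.mem_subgroupOf, MulAction.mem_stabilizer_iff]
      rw [show s • x = ((s : ConjAct G) • x) from rfl, ← Subtype.coe_inj,
        MulAction.orbit.coe_smul]
    have e1 : Nat.card ↥((MulAction.stabilizer (ConjAct G) (↑x : Subgroup G)).subgroupOf S') =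
        Nat.card ↥(MulAction.stabilizer (ConjAct G) (↑x : Subgroup G) ⊓ S') := by
      rw [← Subgroup.inf_subgroupOf_right]
      exact Nat.card_congr (Subgroup.subgroupOfEquivOfLe inf_le_right).toEquiv
    have e2 : MulAction.stabilizer (ConjAct G) (↑x : Subgroup G) ⊓ S' =
        (((Subgroup.normalizer ((↑x : Subgroup G) : Set G)) ⊓ (S : Subgroup G)).map ConjAct.toConjAct.toMonoidHom : Subgroup (ConjAct G)) := by
      rw [stabilizer_conjAct, hS']
      exact (Subgroup.map_inf _ _ _ ConjAct.toConjAct.injective).symm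
    have e3 : Nat.card
        ↥((((Subgroup.normalizer ((↑x : Subgroup G) : Set G)) ⊓ (S : Subgroup G)).map ConjAct.toConjAct.toMonoidHom : Subgroup (ConjAct G))) =
        Nat.card ↥((Subgroup.normalizer ((↑x : Subgroup G) : Set G)) ⊓ (S : Subgroup G)) :=
      (Nat.card_congr (Subgroup.equivMapOfInjective _ _ ConjAct.toConjAct.injective).toEquiv).symm
    rw [h1, e1, e2, e3, inf_comm]
  set nn : ℕ := (Nat.card G).factorization p with hnn
  have hcardS : Nat.card ↥(S : Subgroup G) = p ^ nn := S.card_eq_multiplicity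
  have hcardS' : Nat.card ↥S' = p ^ nn := by
    rw [← hcardS, hS']
    exact (Nat.card_congr
      (Subgroup.equivMapOfInjective _ _ ConjAct.toConjAct.injective).toEquiv).symm
  have hble : b ≤ nn := by
    have hd : Nat.card ↥((S : Subgroup G) ⊓ (Subgroup.normalizer (Q₀ : Set G))) ∣ Nat.card ↥(S : Subgroup G) :=
      Subgroup.card_dvd_of_le inf_le_left
    rw [hQ₀card, hcardS] at hd
    exact (Nat.pow_dvd_pow_iff_le_right hp.one_lt).mp hd
  have hclass := MulAction.card_eq_sum_card_group_div_card_stabilizer ↥S' ↥X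
  have hsum : Nat.card ↥X = ∑ ω : Quotient (MulAction.orbitRel ↥S' ↥X),
      p ^ nn / Nat.card ↥((S : Subgroup G) ⊓ (Subgroup.normalizer (((ω.out : ↥X) : Subgroup G) : Set G))) := by
    rw [Nat.card_eq_fintype_card, hclass]
    refine Finset.sum_congr rfl fun ω _ => ?_
    rw [← Nat.card_eq_fintype_card, ← Nat.card_eq_fintype_card, hcardS', hstab]
  set M : Finset (Quotient (MulAction.orbitRel ↥S' ↥X)) := Finset.univ.filter
    (fun ω => Nat.card ↥((S : Subgroup G) ⊓ (Subgroup.normalizer (((ω.out : ↥X) : Subgroup G) : Set G))) = p ^ b)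
    with hM
  have houtconj : ∀ ω : Quotient (MulAction.orbitRel ↥S' ↥X),
      ∃ c : G, conjBy c P = ((ω.out : ↥X) : Subgroup G) := fun ω =>
    (hmemX _).mp (ω.out : ↥X).2
  have hinj : Function.Injective
      (fun ω : Quotient (MulAction.orbitRel ↥S' ↥X) => ((ω.out : ↥X) : Subgroup G)) := by
    intro a c h
    exact Quotient.out_injective (Subtype.coe_injective h)
  refine ⟨M.image (fun ω => ((ω.out : ↥X) : Subgroup G)), ?_, ?_, ?_⟩
  · intro Q hQ
    obtain ⟨ω, hωM, rfl⟩ := Finset.mem_image.mp hQ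
    rw [hM, Finset.mem_filter] at hωM
    exact (hFNiff _).mpr ⟨houtconj ω, hωM.2⟩
  · intro Q hQfn
    obtain ⟨hconjQ, hcardQ⟩ := (hFNiff Q).mp hQfn
    have hQX : Q ∈ X := (hmemX Q).mpr hconjQ
    set x : ↥X := ⟨Q, hQX⟩ with hx
    set ω : Quotient (MulAction.orbitRel ↥S' ↥X) := Quotient.mk'' x with hω
    have hrel : ω.out ∈ MulAction.orbit ↥S' x := by
      have h := Quotient.out_eq' ω
      rw [hω] at h
      exact Quotient.exact' h
    obtain ⟨s', hs'⟩ := hrel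
    obtain ⟨s, hsS, hs⟩ := Subgroup.mem_map.mp s'.2
    have hconjs : conjBy s Q = ((ω.out : ↥X) : Subgroup G) := by
      have h2 : ((s' : ConjAct G) • Q : Subgroup G) = ((ω.out : ↥X) : Subgroup G) :=
        congrArg Subtype.val hs'
      rw [conjAct_smul_eq] at h2
      have h3 : ConjAct.ofConjAct (s' : ConjAct G) = s := by
        rw [← hs]; rfl
      rw [h3] at h2
      exact h2
    have hωM : ω ∈ M := by
      rw [hM, Finset.mem_filter]
      refine ⟨Finset.mem_univ _, ?_⟩
      rw [← hconjs, hfconjS s hsS Q, hcardQ]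
    refine ⟨((ω.out : ↥X) : Subgroup G),
      ⟨Finset.mem_image.mpr ⟨ω, hωM, rfl⟩, ⟨s, hsS, hconjs⟩⟩, ?_⟩
    rintro R' ⟨hR'T, s₂, hs₂S, hconj₂⟩
    obtain ⟨ω', hω'M, rfl⟩ := Finset.mem_image.mp hR'T
    suffices hωeq : ω' = ω by rw [hωeq]
    have hs₂' : ConjAct.toConjAct s₂ ∈ S' := by
      rw [hS']
      exact Subgroup.mem_map.mpr ⟨s₂, hs₂S, rfl⟩
    have hout : (ω'.out : ↥X) = (⟨ConjAct.toConjAct s₂, hs₂'⟩ : ↥S') • x := by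
      apply Subtype.ext
      show ((ω'.out : ↥X) : Subgroup G) = ConjAct.toConjAct s₂ • (Q : Subgroup G)
      rw [conjAct_smul_eq]
      simpa using hconj₂.symm
    have : ω' = Quotient.mk'' ((⟨ConjAct.toConjAct s₂, hs₂'⟩ : ↥S') • x) := by
      rw [← hout, Quotient.out_eq']
    rw [this, hω]
    exact Quotient.sound' (MulAction.mem_orbit x _)
  · intro hpdvd
    rw [Finset.card_image_of_injective _ hinj] at hpdvd
    have hdvd_sum : p ^ (nn - b + 1) ∣ Nat.card ↥X := by
      rw [hsum, ← Finset.sum_filter_add_sum_filter_not Finset.univ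
        (fun ω => Nat.card ↥((S : Subgroup G) ⊓ (Subgroup.normalizer (((ω.out : ↥X) : Subgroup G) : Set G))) = p ^ b)]
      apply dvd_add
      · have hterm : ∀ ω ∈ M, p ^ nn /
            Nat.card ↥((S : Subgroup G) ⊓ (Subgroup.normalizer (((ω.out : ↥X) : Subgroup G) : Set G)))
            = p ^ (nn - b) := by
          intro ω hω
          rw [hM, Finset.mem_filter] at hω
          rw [hω.2, Nat.pow_div hble hp.pos]
        rw [← hM, Finset.sum_congr rfl hterm, Finset.sum_const, smul_eq_mul, pow_succ, mul_comm M.card]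
        exact mul_dvd_mul (dvd_refl _) hpdvd
      · apply Finset.dvd_sum
        intro ω hω
        rw [Finset.mem_filter] at hω
        obtain ⟨e, he⟩ := hfpow ((ω.out : ↥X) : Subgroup G)
        have hele : e ≤ b := by
          have := hfle _ (houtconj ω)
          rw [he] at this
          exact (Nat.pow_le_pow_iff_right hp.one_lt).mp this
        have hene : e ≠ b := by
          intro hcon
          exact hω.2 (by rw [he, hcon])
        have helt : e < b := lt_of_le_of_ne hele hene
        rw [he, Nat.pow_div (le_trans hele hble) hp.pos]
        exact pow_dvd_pow p (by omega)
    letI : Fintype (ConjAct G) := Fintype.ofFinite _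
    letI : Fintype ↥(MulAction.orbit (ConjAct G) P) := Fintype.ofFinite _
    letI : Fintype ↥(MulAction.stabilizer (ConjAct G) P) := Fintype.ofFinite _
    have horb := MulAction.card_orbit_mul_card_stabilizer_eq_card_group (ConjAct G) P
    have hNP : Nat.card ↥(MulAction.stabilizer (ConjAct G) P) = Nat.card ↥(Subgroup.normalizer (P : Set G)) := by
      rw [stabilizer_conjAct]
      exact (Nat.card_congr
        (Subgroup.equivMapOfInjective _ _ ConjAct.toConjAct.injective).toEquiv).symm
    have htot : Nat.card ↥X * Nat.card ↥(Subgroup.normalizer (P : Set G)) = Nat.card G := by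
      rw [← hNP]
      have h1 : Nat.card (ConjAct G) = Nat.card G :=
        Nat.card_congr ConjAct.ofConjAct.toEquiv
      rw [← h1, Nat.card_eq_fintype_card, Nat.card_eq_fintype_card, Nat.card_eq_fintype_card]
      exact horb
    have hbdvd : p ^ b ∣ Nat.card ↥(Subgroup.normalizer (P : Set G)) := by
      rw [hb, hNQ₀]
      exact Nat.ordProj_dvd _ p
    have hfin : p ^ (nn + 1) ∣ Nat.card G := by
      rw [← htot]
      have h2 : p ^ (nn - b + 1) * p ^ b ∣ Nat.card ↥X * Nat.card ↥(Subgroup.normalizer (P : Set G)) :=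
        mul_dvd_mul hdvd_sum hbdvd
      have he : (nn - b + 1) + b = nn + 1 := by omega
      rwa [← pow_add, he] at h2
    have hcontr : nn + 1 ≤ (Nat.card G).factorization p :=
      (Nat.Prime.pow_dvd_iff_le_factorization hp Nat.card_pos.ne').mp hfin
    omega
end
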